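/- Let s > 0 and κ > 0 with κ < s, and let D be a real-valued random variable satisfying |D| ≤ κ almost surely. Then E[s/(s − D)] ≤ (s² + s·E[D])/(s² − κ²). In particular, if additionally s ≥ √2·κ and E[D] ≥ 0, then E[s/(s − D)] ≤ 1 + κ²/(s² − κ²) + 2·E[D]/s. -/

import Mathlib

open MeasureTheory

/-- If `|D| ≤ κ < s` almost surely with `s, κ > 0`, then
`E[s/(s - D)] ≤ (s² + s E[D])/(s² - κ²)`; and if moreover `s ≥ √2 κ` and `E[D] ≥ 0`, then
`E[s/(s - D)] ≤ 1 + κ²/(s² - κ²) + 2 E[D]/s`. -/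
theorem expectation_ratio_bound
    {Ω : Type*} {mΩ : MeasurableSpace Ω} (μ : Measure Ω) [IsProbabilityMeasure μ]
    (s κ : ℝ) (hs : 0 < s) (hκ : 0 < κ) (hκs : κ < s)
    (D : Ω → ℝ) (hDint : Integrable D μ) (hD : ∀ᵐ ω ∂μ, |D ω| ≤ κ) :
    (∫ ω, s / (s - D ω) ∂μ) ≤ (s ^ 2 + s * ∫ ω, D ω ∂μ) / (s ^ 2 - κ ^ 2) ∧
    (Real.sqrt 2 * κ ≤ s → 0 ≤ ∫ ω, D ω ∂μ →
      (∫ ω, s / (s - D ω) ∂μ) ≤ 1 + κ ^ 2 / (s ^ 2 - κ ^ 2) + 2 * (∫ ω, D ω ∂μ) / s) := by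
  have hden : (0:ℝ) < s ^ 2 - κ ^ 2 := by nlinarith
  -- pointwise bound
  have hpt : ∀ᵐ ω ∂μ, s / (s - D ω) ≤ (s ^ 2 + s * D ω) / (s ^ 2 - κ ^ 2) := by
    filter_upwards [hD] with ω hω
    have h1 : -κ ≤ D ω := (abs_le.mp hω).1
    have h2 : D ω ≤ κ := (abs_le.mp hω).2
    have hpos : 0 < s - D ω := by linarith
    have hsq : D ω ^ 2 ≤ κ ^ 2 := sq_le_sq' h1 h2
    rw [div_le_div_iff₀ hpos hden]
    nlinarith
  -- integrability of LHS
  have hmeas : AEStronglyMeasurable (fun ω => s / (s - D ω)) μ :=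
    (aemeasurable_const.div (aemeasurable_const.sub hDint.1.aemeasurable)).aestronglyMeasurable
  have hint1 : Integrable (fun ω => s / (s - D ω)) μ := by
    refine Integrable.mono' (integrable_const (s / (s - κ))) hmeas ?_
    filter_upwards [hD] with ω hω
    have h1 : -κ ≤ D ω := (abs_le.mp hω).1
    have h2 : D ω ≤ κ := (abs_le.mp hω).2
    have hpos : 0 < s - D ω := by linarith
    rw [Real.norm_eq_abs, abs_of_nonneg (div_nonneg hs.le hpos.le)]
    exact div_le_div_of_nonneg_left hs.le (by linarith) (by linarith)
  have hint2 : Integrable (fun ω => (s ^ 2 + s * D ω) / (s ^ 2 - κ ^ 2)) μ :=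
    ((integrable_const (s ^ 2)).add (hDint.const_mul s)).div_const _
  have hmain : (∫ ω, s / (s - D ω) ∂μ) ≤ (s ^ 2 + s * ∫ ω, D ω ∂μ) / (s ^ 2 - κ ^ 2) := by
    calc (∫ ω, s / (s - D ω) ∂μ)
        ≤ ∫ ω, (s ^ 2 + s * D ω) / (s ^ 2 - κ ^ 2) ∂μ := integral_mono_ae hint1 hint2 hpt
      _ = (s ^ 2 + s * ∫ ω, D ω ∂μ) / (s ^ 2 - κ ^ 2) := by
          rw [integral_div, integral_add (integrable_const _) (hDint.const_mul s),
            integral_const, integral_const_mul]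
          simp
  refine ⟨hmain, fun hsk hE => hmain.trans ?_⟩
  have h2κ : 2 * κ ^ 2 ≤ s ^ 2 := by
    nlinarith [Real.sq_sqrt (by norm_num : (0:ℝ) ≤ 2), Real.sqrt_nonneg 2,
      mul_le_mul_of_nonneg_left hsk (Real.sqrt_nonneg 2)]
  set E := ∫ ω, D ω ∂μ
  have key : s * E / (s ^ 2 - κ ^ 2) ≤ 2 * E / s := by
    rw [div_le_div_iff₀ hden hs]
    nlinarith [mul_nonneg hE (sub_nonneg.mpr h2κ)]
  have heq : (s ^ 2 + s * E) / (s ^ 2 - κ ^ 2)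
      = 1 + κ ^ 2 / (s ^ 2 - κ ^ 2) + s * E / (s ^ 2 - κ ^ 2) := by
    field_simp
    ring
  rw [heq]
  have : 2 * E / s = 2 * E / s := rfl
  linarith [key]
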